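/- If there exists a t-MIPPC(n, M, q) (a q-ary multimedia t-IPP code of length n with M codewords), then there exists a t-MIPPC(nq, M, 2) (a binary multimedia t-IPP code of length nq with M codewords). -/
import Mathlib


/-- The descendant code `desc(C') = C'(1) × ⋯ × C'(n)` of a sub-code `C'`. -/
def descC {n q : ℕ} (C' : Finset (Fin n → Fin q)) : Set (Fin n → Fin q) :=
  {x | ∀ i, ∃ c ∈ C', c i = x i}

/-- `C` is a `t`-MIPPC(n,·,q): every nonempty family of nonempty sub-codes of size at most `t`
with the same descendant code has a common codeword. -/
def isMIPPC {n q : ℕ} (t : ℕ) (C : Finset (Fin n → Fin q)) : Prop :=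
  ∀ S : Set (Fin n → Fin q),
    (∃ C' : Finset (Fin n → Fin q), C' ⊆ C ∧ C'.Nonempty ∧ C'.card ≤ t ∧ descC C' = S) →
    ∃ c, ∀ C' : Finset (Fin n → Fin q),
      C' ⊆ C → C'.Nonempty → C'.card ≤ t → descC C' = S → c ∈ C'

open Classical in
/-- The indicator-vector replacement map. -/
noncomputable def phiMap {n q : ℕ} (c : Fin n → Fin q) : Fin (n * q) → Fin 2 :=
  fun j => if c (finProdFinEquiv.symm j).1 = (finProdFinEquiv.symm j).2 then 1 else 0

lemma phiMap_apply {n q : ℕ} (c : Fin n → Fin q) (i : Fin n) (a : Fin q) :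
    phiMap c (finProdFinEquiv (i, a)) = if c i = a then 1 else 0 := by
  simp [phiMap]

lemma fin2_eq_zero {d : Fin 2} (h : d ≠ 1) : d = 0 := by
  fin_cases d <;> simp_all

lemma phiMap_inj {n q : ℕ} : Function.Injective (phiMap (n := n) (q := q)) := by
  intro c c' h
  funext i
  have h2 := congrFun h (finProdFinEquiv (i, c i))
  rw [phiMap_apply, phiMap_apply, if_pos rfl] at h2
  by_contra hne
  rw [if_neg (fun hh => hne hh.symm)] at h2
  exact one_ne_zero h2

lemma desc_eq_of_image_desc_eq {n q : ℕ} {C₀ C₂ : Finset (Fin n → Fin q)}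
    (h₀ : C₀.Nonempty) (h₂ : C₂.Nonempty)
    (h : descC (C₀.image phiMap) = descC (C₂.image phiMap)) :
    descC C₀ = descC C₂ := by
  classical
  have key : ∀ (C₀ C₂ : Finset (Fin n → Fin q)), C₀.Nonempty →
      descC (C₀.image phiMap) = descC (C₂.image phiMap) →
      ∀ (i : Fin n) (a : Fin q), (∃ c ∈ C₀, c i = a) → (∃ c ∈ C₂, c i = a) := by
    intro C₀ C₂ h₀ h i a ⟨c, hc, hca⟩
    set x : Fin (n * q) → Fin 2 := fun j => if ∃ c ∈ C₀, phiMap c j = 1 then 1 else 0 with hx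
    have hxmem : x ∈ descC (C₀.image phiMap) := by
      intro j
      by_cases hj : ∃ c ∈ C₀, phiMap c j = 1
      · obtain ⟨c', hc', h1⟩ := hj
        exact ⟨phiMap c', Finset.mem_image_of_mem _ hc',
          by simp only [hx, if_pos (⟨c', hc', h1⟩ : ∃ c ∈ C₀, phiMap c j = 1)]; exact h1⟩
      · obtain ⟨c', hc'⟩ := h₀
        refine ⟨phiMap c', Finset.mem_image_of_mem _ hc', ?_⟩
        have hne : phiMap c' j ≠ 1 := fun hh => hj ⟨c', hc', hh⟩
        simp only [hx, if_neg hj]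
        exact fin2_eq_zero hne
    rw [h] at hxmem
    have hco := hxmem (finProdFinEquiv (i, a))
    have hx1 : x (finProdFinEquiv (i, a)) = 1 := by
      simp only [hx]
      exact if_pos ⟨c, hc, by rw [phiMap_apply, if_pos hca]⟩
    rw [hx1] at hco
    obtain ⟨d, hd, hd1⟩ := hco
    obtain ⟨c'', hc'', rfl⟩ := Finset.mem_image.mp hd
    rw [phiMap_apply] at hd1
    by_cases hcc : c'' i = a
    · exact ⟨c'', hc'', hcc⟩
    · rw [if_neg hcc] at hd1; exact absurd hd1 zero_ne_one
  ext x
  constructor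
  · intro hx i
    obtain ⟨c, hc, hci⟩ := hx i
    exact key C₀ C₂ h₀ h i (x i) ⟨c, hc, hci⟩
  · intro hx i
    obtain ⟨c, hc, hci⟩ := hx i
    exact key C₂ C₀ h₂ h.symm i (x i) ⟨c, hc, hci⟩

/-- From a `t`-MIPPC(n,M,q) one obtains a binary `t`-MIPPC(nq,M,2). -/
theorem mippc_binary_of_mippc {t n M q : ℕ} (C : Finset (Fin n → Fin q))
    (hM : C.card = M) (hC : isMIPPC t C) :
    ∃ D : Finset (Fin (n * q) → Fin 2), D.card = M ∧ isMIPPC t D := by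
  classical
  refine ⟨C.image phiMap, by rw [Finset.card_image_of_injective _ phiMap_inj, hM], ?_⟩
  intro S ⟨D', hD'sub, hD'ne, hD'card, hD'desc⟩
  -- pull back D' to a subset of C
  have pull : ∀ D'' : Finset (Fin (n * q) → Fin 2), D'' ⊆ C.image phiMap →
      (C.filter (fun c => phiMap c ∈ D'')).image phiMap = D'' := by
    intro D'' hsub
    ext d
    simp only [Finset.mem_image, Finset.mem_filter]
    constructor
    · rintro ⟨c, ⟨_, hmem⟩, rfl⟩; exact hmem
    · intro hd
      obtain ⟨c, hc, rfl⟩ := Finset.mem_image.mp (hsub hd)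
      exact ⟨c, ⟨hc, hd⟩, rfl⟩
  set C₀ := C.filter (fun c => phiMap c ∈ D') with hC₀
  have hC₀img : C₀.image phiMap = D' := pull D' hD'sub
  have hC₀ne : C₀.Nonempty := by
    obtain ⟨d, hd⟩ := hD'ne
    rw [← hC₀img] at hd
    obtain ⟨c, hc, _⟩ := Finset.mem_image.mp hd
    exact ⟨c, hc⟩
  have hC₀card : C₀.card ≤ t := by
    rw [← Finset.card_image_of_injective C₀ phiMap_inj, hC₀img]; exact hD'card
  obtain ⟨c, hcall⟩ := hC (descC C₀)
    ⟨C₀, Finset.filter_subset _ _, hC₀ne, hC₀card, rfl⟩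
  refine ⟨phiMap c, ?_⟩
  intro D'' hsub hne hcard hdesc
  set C₂ := C.filter (fun c => phiMap c ∈ D'') with hC₂
  have hC₂img : C₂.image phiMap = D'' := pull D'' hsub
  have hC₂ne : C₂.Nonempty := by
    obtain ⟨d, hd⟩ := hne
    rw [← hC₂img] at hd
    obtain ⟨c', hc', _⟩ := Finset.mem_image.mp hd
    exact ⟨c', hc'⟩
  have hC₂card : C₂.card ≤ t := by
    rw [← Finset.card_image_of_injective C₂ phiMap_inj, hC₂img]; exact hcard
  have hdd : descC C₂ = descC C₀ := by
    apply desc_eq_of_image_desc_eq hC₂ne hC₀ne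
    rw [hC₂img, hC₀img, hdesc, hD'desc]
  have hcin : c ∈ C₂ := hcall C₂ (Finset.filter_subset _ _) hC₂ne hC₂card hdd
  rw [← hC₂img]
  exact Finset.mem_image_of_mem _ hcin
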